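/- For every twice continuously differentiable function u : [0,1] → ℂ and every h ∈ L²((0,1),ℂ), one has ∫₀¹ P(u″)(x)·conj(Ph(x))dx + μ₀(u″)·conj(μ₀(h)) = (μ₀(u″) + u(1))·conj(μ₀(h)) + (u(0) − u(1))·conj(μ₁(h)) − ∫₀¹ u(x)·conj(h(x))dx. (Integration-by-parts formula in the H⁻¹(T)-type inner product.) -/

import Mathlib

open MeasureTheory intervalIntegral

/-- `𝓘g(x) = ∫₀ˣ g(y) dy` -/
noncomputable def Iprim (g : ℝ → ℂ) (x : ℝ) : ℂ := ∫ y in (0:ℝ)..x, g y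

/-- `Pg(x) = 𝓘g(x) − ∫₀¹ 𝓘g(z) dz` -/
noncomputable def Pfun (g : ℝ → ℂ) (x : ℝ) : ℂ := Iprim g x - ∫ z in (0:ℝ)..1, Iprim g z

/-- `μ₀(g) = ∫₀¹ g(x) dx` -/
noncomputable def mu0 (g : ℝ → ℂ) : ℂ := ∫ x in (0:ℝ)..1, g x

/-- `μ₁(g) = ∫₀¹ (1−x) g(x) dx` -/
noncomputable def mu1 (g : ℝ → ℂ) : ℂ := ∫ x in (0:ℝ)..1, ((1 - x : ℝ) : ℂ) * g x

lemma fubini_tri (f g : ℝ → ℂ) (hf : ContinuousOn f (Set.Icc 0 1))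
    (hg : IntegrableOn g (Set.Ioc (0:ℝ) 1)) :
    (∫ x in (0:ℝ)..1, f x * ∫ y in (0:ℝ)..x, g y)
      = ∫ y in (0:ℝ)..1, (∫ x in y..(1:ℝ), f x) * g y := by
  have hf' : IntegrableOn f (Set.Ioc (0:ℝ) 1) :=
    (hf.integrableOn_Icc).mono_set Set.Ioc_subset_Icc_self
  have hs : MeasurableSet {p : ℝ × ℝ | p.2 ≤ p.1} :=
    (isClosed_le continuous_snd continuous_fst).measurableSet
  set μ := volume.restrict (Set.Ioc (0:ℝ) 1) with hμ
  set K : ℝ → ℝ → ℂ := fun x y =>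
    Set.indicator {p : ℝ × ℝ | p.2 ≤ p.1} (fun p => f p.1 * g p.2) (x, y) with hKdef
  have hK : Integrable (Function.uncurry K) (μ.prod μ) := by
    have h1 : Integrable (fun p : ℝ × ℝ => f p.1 * g p.2) (μ.prod μ) := hf'.mul_prod hg
    have h2 := h1.indicator hs
    refine h2.congr (Filter.Eventually.of_forall fun p => ?_)
    simp [hKdef, Function.uncurry]
  have swap := MeasureTheory.integral_integral_swap hK
  have hL : (∫ x, (∫ y, K x y ∂μ) ∂μ) = ∫ x in (0:ℝ)..1, f x * ∫ y in (0:ℝ)..x, g y := by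
    rw [intervalIntegral.integral_of_le zero_le_one]
    apply setIntegral_congr_fun measurableSet_Ioc
    intro x hx
    show (∫ y, K x y ∂μ) = f x * ∫ y in (0:ℝ)..x, g y
    have e1 : (fun y => K x y) = Set.indicator (Set.Iic x) (fun y => f x * g y) := by
      funext y
      by_cases hyx : y ≤ x <;> simp [hKdef, Set.indicator_apply, Set.mem_setOf_eq, hyx]
    rw [e1, MeasureTheory.integral_indicator measurableSet_Iic, hμ,
      Measure.restrict_restrict measurableSet_Iic, Set.inter_comm, Set.Ioc_inter_Iic,
      min_eq_right hx.2, MeasureTheory.integral_const_mul,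
      intervalIntegral.integral_of_le hx.1.le]
  have hR : (∫ y, (∫ x, K x y ∂μ) ∂μ) = ∫ y in (0:ℝ)..1, (∫ x in y..(1:ℝ), f x) * g y := by
    rw [intervalIntegral.integral_of_le zero_le_one]
    apply setIntegral_congr_fun measurableSet_Ioc
    intro y hy
    show (∫ x, K x y ∂μ) = (∫ x in y..(1:ℝ), f x) * g y
    have e1 : (fun x => K x y) = Set.indicator (Set.Ici y) (fun x => f x * g y) := by
      funext x
      by_cases hyx : y ≤ x <;> simp [hKdef, Set.indicator_apply, Set.mem_setOf_eq, hyx]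
    have e2 : Set.Ici y ∩ Set.Ioc (0:ℝ) 1 = Set.Icc y 1 := by
      ext x
      simp only [Set.mem_inter_iff, Set.mem_Ici, Set.mem_Ioc, Set.mem_Icc]
      exact ⟨fun ⟨h1, h2⟩ => ⟨h1, h2.2⟩, fun ⟨h1, h2⟩ => ⟨h1, lt_of_lt_of_le hy.1 h1, h2⟩⟩
    rw [e1, MeasureTheory.integral_indicator measurableSet_Ici, hμ,
      Measure.restrict_restrict measurableSet_Ici, e2,
      MeasureTheory.integral_Icc_eq_integral_Ioc, MeasureTheory.integral_mul_const,
      intervalIntegral.integral_of_le hy.2]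
  rw [← hL, ← hR]; exact swap

/-- Integration-by-parts formula in the `H⁻¹(T)`-type inner product: for twice continuously
differentiable `u : [0,1] → ℂ` and `h ∈ L²((0,1),ℂ)`,
`(u″|h)₋₁ = (μ₀(u″) + u(1)) conj(μ₀(h)) + (u(0) − u(1)) conj(μ₁(h)) − ∫₀¹ u conj(h)`. -/
theorem stmt11 (u u' u'' : ℝ → ℂ)
    (hu' : ∀ x ∈ Set.Icc (0:ℝ) 1, HasDerivWithinAt u (u' x) (Set.Icc (0:ℝ) 1) x)
    (hu'' : ∀ x ∈ Set.Icc (0:ℝ) 1, HasDerivWithinAt u' (u'' x) (Set.Icc (0:ℝ) 1) x)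
    (hcont : ContinuousOn u'' (Set.Icc (0:ℝ) 1))
    (h : ℝ → ℂ)
    (hh : MemLp h 2 (volume.restrict (Set.Ioo (0:ℝ) 1))) :
    (∫ x in (0:ℝ)..1, Pfun u'' x * (starRingEnd ℂ) (Pfun h x)) +
        mu0 u'' * (starRingEnd ℂ) (mu0 h) =
      (mu0 u'' + u 1) * (starRingEnd ℂ) (mu0 h) +
        (u 0 - u 1) * (starRingEnd ℂ) (mu1 h) -
        ∫ x in (0:ℝ)..1, u x * (starRingEnd ℂ) (h x) := by
  -- continuity of u and u'
  have hu'c : ContinuousOn u' (Set.Icc (0:ℝ) 1) := fun t ht => (hu'' t ht).continuousWithinAt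
  have huc : ContinuousOn u (Set.Icc (0:ℝ) 1) := fun t ht => (hu' t ht).continuousWithinAt
  have hint_u' : IntervalIntegrable u' volume 0 1 := hu'c.intervalIntegrable_of_Icc zero_le_one
  have hint_u'' : IntervalIntegrable u'' volume 0 1 := hcont.intervalIntegrable_of_Icc zero_le_one
  -- integrability of h
  have hfin : IsFiniteMeasure (volume.restrict (Set.Ioo (0:ℝ) 1)) := by
    constructor
    rw [Measure.restrict_apply_univ, Real.volume_Ioo]
    simp
  have hIoo : IntegrableOn h (Set.Ioo (0:ℝ) 1) :=
    memLp_one_iff_integrable.mp (hh.mono_exponent one_le_two)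
  have hint_h : IntegrableOn h (Set.Ioc (0:ℝ) 1) :=
    (integrableOn_Ioc_iff_integrableOn_Ioo).mpr hIoo
  have hconj : IntegrableOn (fun y => (starRingEnd ℂ) (h y)) (Set.Ioc (0:ℝ) 1) := by
    refine Integrable.mono hint_h (continuous_star.comp_aestronglyMeasurable hint_h.1)
      (Filter.Eventually.of_forall fun y => le_of_eq ?_)
    simp
  -- FTC for u' : Iprim u'' x = u' x - u' 0 on [0,1]
  have hFTC' : ∀ x ∈ Set.Icc (0:ℝ) 1, Iprim u'' x = u' x - u' 0 := by
    intro x hx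
    have hintx : IntervalIntegrable u'' volume 0 x := by
      apply hint_u''.mono_set
      rw [Set.uIcc_of_le hx.1, Set.uIcc_of_le zero_le_one]
      exact Set.Icc_subset_Icc le_rfl hx.2
    refine intervalIntegral.integral_eq_sub_of_hasDeriv_right_of_le hx.1
      (hu'c.mono (Set.Icc_subset_Icc le_rfl hx.2)) (fun t ht => ?_) hintx
    have ht' : t ∈ Set.Ioo (0:ℝ) 1 := ⟨ht.1, lt_of_lt_of_le ht.2 hx.2⟩
    exact ((hu'' t (Set.mem_Icc_of_Ioo ht')).hasDerivAt
      (Icc_mem_nhds ht'.1 ht'.2)).hasDerivWithinAt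
  -- FTC for u on [y,1]
  have hFTC : ∀ y ∈ Set.Icc (0:ℝ) 1, (∫ x in y..(1:ℝ), u' x) = u 1 - u y := by
    intro y hy
    have hinty : IntervalIntegrable u' volume y 1 := by
      apply hint_u'.mono_set
      rw [Set.uIcc_of_le hy.2, Set.uIcc_of_le zero_le_one]
      exact Set.Icc_subset_Icc hy.1 le_rfl
    refine intervalIntegral.integral_eq_sub_of_hasDeriv_right_of_le hy.2
      (huc.mono (Set.Icc_subset_Icc hy.1 le_rfl)) (fun t ht => ?_) hinty
    have ht' : t ∈ Set.Ioo (0:ℝ) 1 := ⟨lt_of_le_of_lt hy.1 ht.1, ht.2⟩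
    exact ((hu' t (Set.mem_Icc_of_Ioo ht')).hasDerivAt
      (Icc_mem_nhds ht'.1 ht'.2)).hasDerivWithinAt
  have hu'01 : (∫ x in (0:ℝ)..1, u' x) = u 1 - u 0 := hFTC 0 (by norm_num)
  -- B = ∫₀¹ Iprim u''
  have hB : (∫ z in (0:ℝ)..1, Iprim u'' z) = (u 1 - u 0) - u' 0 := by
    have : (∫ z in (0:ℝ)..1, Iprim u'' z) = ∫ z in (0:ℝ)..1, (u' z - u' 0) :=
      intervalIntegral.integral_congr fun z hz =>
        hFTC' z (by rwa [Set.uIcc_of_le zero_le_one] at hz)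
    rw [this, intervalIntegral.integral_sub hint_u' intervalIntegrable_const, hu'01,
      intervalIntegral.integral_const]
    simp
  set c : ℂ := u 1 - u 0 with hc
  have hPu'' : ∀ x ∈ Set.Icc (0:ℝ) 1, Pfun u'' x = u' x - c := by
    intro x hx
    unfold Pfun
    rw [hFTC' x hx, hB]
    ring
  -- continuity of Iprim h
  have hIprimCont : ContinuousOn (Iprim h) (Set.Icc (0:ℝ) 1) := by
    have hint' : IntegrableOn h (Set.uIcc (0:ℝ) 1) := by
      rw [Set.uIcc_of_le zero_le_one]
      exact (integrableOn_Icc_iff_integrableOn_Ioc).mpr hint_h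
    have := continuousOn_primitive_interval (a := (0:ℝ)) (b := 1) (μ := volume) hint'
    rwa [Set.uIcc_of_le zero_le_one] at this
  -- A = μ₁ h
  have hA : (∫ z in (0:ℝ)..1, Iprim h z) = mu1 h := by
    have hft := fubini_tri (fun _ => (1:ℂ)) h continuousOn_const hint_h
    simp only [one_mul] at hft
    unfold Iprim mu1
    rw [hft]
    refine intervalIntegral.integral_congr fun y hy => ?_
    rw [intervalIntegral.integral_const]
    simp [Complex.real_smul]
  -- key integral T1
  have hIconj : ∀ x, (starRingEnd ℂ) (Iprim h x) = ∫ y in (0:ℝ)..x, (starRingEnd ℂ) (h y) := by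
    intro x
    unfold Iprim
    simp only [intervalIntegral]
    rw [map_sub, ← integral_conj, ← integral_conj]
  have hmu0conj : (starRingEnd ℂ) (mu0 h) = ∫ y in (0:ℝ)..1, (starRingEnd ℂ) (h y) := by
    have := hIconj 1
    unfold Iprim at this
    unfold mu0
    exact this
  have hintuh : IntervalIntegrable (fun y => u y * (starRingEnd ℂ) (h y)) volume 0 1 := by
    refine IntervalIntegrable.continuousOn_mul ?_ (by rwa [Set.uIcc_of_le zero_le_one])
    rw [intervalIntegrable_iff_integrableOn_Ioc_of_le zero_le_one]
    exact hconj
  have hintconjh : IntervalIntegrable (fun y => (starRingEnd ℂ) (h y)) volume 0 1 := by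
    rw [intervalIntegrable_iff_integrableOn_Ioc_of_le zero_le_one]
    exact hconj
  have hT1 : (∫ x in (0:ℝ)..1, u' x * (starRingEnd ℂ) (Iprim h x))
      = u 1 * (starRingEnd ℂ) (mu0 h) - ∫ x in (0:ℝ)..1, u x * (starRingEnd ℂ) (h x) := by
    have hft := fubini_tri u' (fun y => (starRingEnd ℂ) (h y)) hu'c hconj
    have e1 : (∫ x in (0:ℝ)..1, u' x * (starRingEnd ℂ) (Iprim h x))
        = ∫ x in (0:ℝ)..1, u' x * ∫ y in (0:ℝ)..x, (starRingEnd ℂ) (h y) :=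
      intervalIntegral.integral_congr fun x _ => by rw [hIconj x]
    have e2 : (∫ y in (0:ℝ)..1, (∫ x in y..(1:ℝ), u' x) * (starRingEnd ℂ) (h y))
        = ∫ y in (0:ℝ)..1, (u 1 * (starRingEnd ℂ) (h y) - u y * (starRingEnd ℂ) (h y)) := by
      refine intervalIntegral.integral_congr fun y hy => ?_
      rw [hFTC y (by rwa [Set.uIcc_of_le zero_le_one] at hy)]
      ring
    rw [e1, hft, e2, intervalIntegral.integral_sub (hintconjh.const_mul _) hintuh,
      intervalIntegral.integral_const_mul, hmu0conj]
  -- final computation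
  have hPh : ∀ x, Pfun h x = Iprim h x - mu1 h := by
    intro x; unfold Pfun; rw [hA]
  have hconjIprim_cont : ContinuousOn (fun x => (starRingEnd ℂ) (Iprim h x)) (Set.Icc (0:ℝ) 1) :=
    continuous_star.comp_continuousOn hIprimCont
  set d : ℂ := (starRingEnd ℂ) (mu1 h) with hd
  have hmain : (∫ x in (0:ℝ)..1, Pfun u'' x * (starRingEnd ℂ) (Pfun h x))
      = (∫ x in (0:ℝ)..1, u' x * (starRingEnd ℂ) (Iprim h x))
        - d * (∫ x in (0:ℝ)..1, u' x)
        - c * (∫ x in (0:ℝ)..1, (starRingEnd ℂ) (Iprim h x))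
        + c * d := by
    have e0 : (∫ x in (0:ℝ)..1, Pfun u'' x * (starRingEnd ℂ) (Pfun h x))
        = ∫ x in (0:ℝ)..1, (u' x * (starRingEnd ℂ) (Iprim h x) - d * u' x
            - c * (starRingEnd ℂ) (Iprim h x) + c * d) := by
      refine intervalIntegral.integral_congr fun x hx => ?_
      rw [Set.uIcc_of_le zero_le_one] at hx
      rw [hPu'' x hx, hPh x, map_sub]
      ring
    have i1 : IntervalIntegrable (fun x => u' x * (starRingEnd ℂ) (Iprim h x)) volume 0 1 :=
      (hu'c.mul hconjIprim_cont).intervalIntegrable_of_Icc zero_le_one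
    have i2 : IntervalIntegrable (fun x => d * u' x) volume 0 1 := hint_u'.const_mul d
    have i3 : IntervalIntegrable (fun x => c * (starRingEnd ℂ) (Iprim h x)) volume 0 1 :=
      ((continuousOn_const.mul hconjIprim_cont).intervalIntegrable_of_Icc zero_le_one)
    rw [e0, intervalIntegral.integral_add ((i1.sub i2).sub i3) intervalIntegrable_const,
      intervalIntegral.integral_sub (i1.sub i2) i3, intervalIntegral.integral_sub i1 i2,
      intervalIntegral.integral_const_mul, intervalIntegral.integral_const_mul,
      intervalIntegral.integral_const]
    simp
  have hconjint : (∫ x in (0:ℝ)..1, (starRingEnd ℂ) (Iprim h x)) = d := by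
    have : (∫ x in (0:ℝ)..1, (starRingEnd ℂ) (Iprim h x))
        = (starRingEnd ℂ) (∫ x in (0:ℝ)..1, Iprim h x) := by
      simp only [intervalIntegral]
      rw [map_sub, ← integral_conj, ← integral_conj]
    rw [this, hA]
  rw [hmain, hconjint, hT1, hu'01]
  rw [hd, hc]
  ring
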